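/- Let G = (V,E) be a finite connected graph, k ≥ 1, and for a partition λ = (j_1, j_2, …) of k, let C(λ) ∈ M(V)^{⊗N} be the sum over all placements, of the h-distance matrix D^{[h]} at j_h distinct tensor positions for each h (identity elsewhere), of the corresponding elementary tensors. Let φ be the normalized trace on M(V)^{⊗N}, φ(a) = |V|^{-N} Tr(a). Then for every partition λ of k other than λ_0 = (k,0,0,…), and for every integer m ≥ 1, lim_{N→∞} φ( (C(λ)/N^{k/2})^m ) = 0; indeed φ( (C(λ)/N^{k/2})^m ) = O(N^{-m/2}). -/

import Mathlib

open scoped Classical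
open Filter Topology

noncomputable section

set_option linter.unusedSectionVars false
set_option maxHeartbeats 1000000

/-- The `N`-fold Cartesian power of a graph `G`: two vertices `x y : Fin N → V` are
adjacent iff there is exactly one index `i` with `x i` adjacent to `y i` in `G`
and `x j = y j` for all `j ≠ i`. -/
def cartPower {V : Type*} (G : SimpleGraph V) (N : ℕ) : SimpleGraph (Fin N → V) where
  Adj x y := ∃! i, G.Adj (x i) (y i) ∧ ∀ j, j ≠ i → x j = y j
  symm := by
    refine ⟨?_⟩
    rintro x y ⟨i, ⟨hadj, hrest⟩, huniq⟩
    exact ⟨i, ⟨hadj.symm, fun j hj => (hrest j hj).symm⟩,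
      fun i' ⟨hadj', hrest'⟩ => huniq i' ⟨hadj'.symm, fun j hj => (hrest' j hj).symm⟩⟩
  loopless := by
    refine ⟨?_⟩
    rintro x ⟨i, ⟨hadj, -⟩, -⟩
    exact G.irrefl hadj

/-- The distance `k`-graph of a graph `G`: same vertex set, with an edge `{x, y}`
whenever the graph distance of `x` and `y` in `G` equals `k`. -/
def distanceGraph {V : Type*} (G : SimpleGraph V) (k : ℕ) : SimpleGraph V where
  Adj x y := x ≠ y ∧ G.dist x y = k
  symm := by
    refine ⟨?_⟩
    rintro x y ⟨hne, hd⟩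
    exact ⟨hne.symm, by rwa [SimpleGraph.dist_comm]⟩
  loopless := by refine ⟨?_⟩; rintro x ⟨hne, -⟩; exact hne rfl

/-- `M(V)^{⊗N}` is identified with matrices indexed by `V^N × V^N`: the elementary
tensor `B_1 ⊗ ⋯ ⊗ B_N` has `(x, y)` entry `∏ i, (B i) (x i) (y i)`. -/
def elemTensor {V : Type*} [Fintype V] {N : ℕ} (B : Fin N → Matrix V V ℂ) :
    Matrix (Fin N → V) (Fin N → V) ℂ :=
  Matrix.of fun x y => ∏ i, B i (x i) (y i)

/-- The elementary tensor with `b` at the `i`-th position and identity matrices elsewhere. -/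
def matAt {V : Type*} [Fintype V] {N : ℕ} (b : Matrix V V ℂ) (i : Fin N) :
    Matrix (Fin N → V) (Fin N → V) ℂ :=
  elemTensor (Function.update (fun _ => (1 : Matrix V V ℂ)) i b)

/-- The `h`-distance matrix `D^{[h]}` of a graph: the 0-1 matrix indexed by `V × V`
whose `(ξ, η)` entry is `1` exactly when `∂_G(ξ, η) = h`. -/
def distMatrix {V : Type*} (G : SimpleGraph V) (h : ℕ) : Matrix V V ℂ :=
  Matrix.of fun ξ η => if G.dist ξ η = h then 1 else 0

/-- `C(λ) ∈ M(V)^{⊗N}` for a partition `λ` of `k` with multiplicities `j h` of the part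
`h`: the sum over all placements of `D^{[h]}` at `j h` distinct tensor positions, for
each `h ≥ 1` (with identity matrices at the remaining positions), of the corresponding
elementary tensors. A placement is encoded by a function `f : Fin N → Fin (k + 1)`,
position `i` carrying `D^{[f i]}` if `f i ≥ 1` and the identity if `f i = 0`. -/
def Cpart {V : Type*} [Fintype V] (G : SimpleGraph V) (N k : ℕ) (j : ℕ → ℕ) :
    Matrix (Fin N → V) (Fin N → V) ℂ :=
  ∑ f ∈ Finset.univ.filter
      (fun f : Fin N → Fin (k + 1) => ∀ h : ℕ, 1 ≤ h →
        (Finset.univ.filter fun i => (f i : ℕ) = h).card = j h),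
    elemTensor fun i => if (f i : ℕ) = 0 then 1 else distMatrix G (f i)

section Helpers

variable {V : Type*} [Fintype V] [DecidableEq V] {N : ℕ}

lemma elemTensor_one : elemTensor (fun _ : Fin N => (1 : Matrix V V ℂ)) = 1 := by
  ext x y
  simp only [elemTensor, Matrix.of_apply, Matrix.one_apply]
  rw [Finset.prod_boole]
  simp [funext_iff]

lemma elemTensor_mul (B B' : Fin N → Matrix V V ℂ) :
    elemTensor B * elemTensor B' = elemTensor (fun i => B i * B' i) := by
  ext x y
  simp only [elemTensor, Matrix.mul_apply, Matrix.of_apply]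
  rw [Finset.prod_univ_sum]
  rw [Fintype.piFinset_univ]
  rw [← Finset.sum_congr rfl (fun z _ => Finset.prod_mul_distrib)]

lemma prod_map_elemTensor (L : List (Fin N → Matrix V V ℂ)) :
    (L.map elemTensor).prod = elemTensor (fun i => (L.map (fun B => B i)).prod) := by
  induction L with
  | nil => simpa using elemTensor_one.symm
  | cons a L ih =>
      simp only [List.map_cons, List.prod_cons, ih, elemTensor_mul]

lemma trace_elemTensor (B : Fin N → Matrix V V ℂ) :
    (elemTensor B).trace = ∏ i, (B i).trace := by
  simp only [Matrix.trace, Matrix.diag, elemTensor, Matrix.of_apply]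
  rw [Finset.prod_univ_sum, Fintype.piFinset_univ]

lemma sum_pow_piFinset {R : Type*} [Semiring R] {α : Type*} [DecidableEq α]
    (s : Finset α) (x : α → R) :
    ∀ m : ℕ, (∑ a ∈ s, x a) ^ m =
      ∑ F ∈ Fintype.piFinset (fun _ : Fin m => s), (List.ofFn fun l => x (F l)).prod
  | 0 => by simp
  | (m+1) => by
    rw [pow_succ', sum_pow_piFinset s x m, Finset.sum_mul_sum]
    rw [← Finset.sum_product']
    refine Finset.sum_nbij' (fun p => Fin.cons p.1 p.2) (fun G => (G 0, fun l => G l.succ))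
      ?_ ?_ ?_ ?_ ?_
    · rintro ⟨a, F⟩ hp
      simp only [Finset.mem_product, Fintype.mem_piFinset] at hp ⊢
      intro i
      refine Fin.cases ?_ ?_ i
      · simpa using hp.1
      · intro l; simpa using hp.2 l
    · intro G hG
      simp only [Fintype.mem_piFinset] at hG
      exact Finset.mem_product.2 ⟨hG 0, Fintype.mem_piFinset.2 fun l => hG l.succ⟩
    · rintro ⟨a, F⟩ _; simp
    · intro G _; exact (Fin.cons_self_tail G)
    · rintro ⟨a, F⟩ _
      rw [List.ofFn_succ]
      simp [List.prod_cons]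

lemma prod_ofFn_eq_of_forall_ne {M : Type*} [Monoid M] :
    ∀ {m : ℕ} (g : Fin m → M) (l0 : Fin m), (∀ l, l ≠ l0 → g l = 1) →
      (List.ofFn g).prod = g l0
  | 0, _, l0, _ => l0.elim0
  | (m+1), g, l0, h => by
    rw [List.ofFn_succ, List.prod_cons]
    rcases Fin.eq_zero_or_eq_succ l0 with h0 | ⟨l0', rfl⟩
    · subst h0
      have : ∀ l : Fin m, g l.succ = 1 := fun l => h l.succ (Fin.succ_ne_zero l)
      rw [List.prod_eq_one, mul_one]
      intro a ha
      obtain ⟨l, rfl⟩ := List.mem_ofFn.1 ha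
      exact this l
    · rw [h 0 (Fin.succ_ne_zero l0').symm, one_mul]
      exact prod_ofFn_eq_of_forall_ne (fun l => g l.succ) l0'
        fun l hl => h l.succ (by simpa using hl)

lemma trace_distMatrix_eq_zero (G : SimpleGraph V) {h : ℕ} (hh : 1 ≤ h) :
    (distMatrix G h).trace = 0 := by
  simp only [Matrix.trace, Matrix.diag, distMatrix, Matrix.of_apply]
  rw [Finset.sum_eq_zero]
  intro ξ _
  rw [SimpleGraph.dist_self]
  simp only [ite_eq_right_iff]
  intro h0; omega

lemma abs_list_prod_entry_le (L : List (Matrix V V ℂ))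
    (hL : ∀ A ∈ L, ∀ x y, ‖A x y‖ ≤ 1) :
    ∀ x y, ‖L.prod x y‖ ≤ (Fintype.card V : ℝ) ^ L.length := by
  induction L with
  | nil =>
    intro x y
    simp only [List.prod_nil, List.length_nil, pow_zero]
    rw [Matrix.one_apply]
    split <;> simp
  | cons a L ih =>
    intro x y
    rw [List.prod_cons, List.length_cons]
    have h1 : ∀ x y, ‖a x y‖ ≤ 1 := hL a (List.mem_cons_self (a := a) (l := L))
    have h2 := ih (fun A hA => hL A (List.mem_cons_of_mem a hA))
    rw [Matrix.mul_apply]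
    calc ‖∑ z, a x z * L.prod z y‖
        ≤ ∑ z, ‖a x z * L.prod z y‖ := norm_sum_le _ _
      _ ≤ ∑ _z : V, 1 * (Fintype.card V : ℝ) ^ L.length := by
          refine Finset.sum_le_sum fun z _ => ?_
          rw [norm_mul]
          exact mul_le_mul (h1 x z) (h2 z y) (by positivity) zero_le_one
      _ = (Fintype.card V : ℝ) ^ (L.length + 1) := by
          simp [Finset.sum_const, pow_succ]; ring

lemma abs_trace_le (A : Matrix V V ℂ) (c : ℝ) (h : ∀ x, ‖A x x‖ ≤ c) :
    ‖A.trace‖ ≤ (Fintype.card V : ℝ) * c := by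
  calc ‖A.trace‖ ≤ ∑ x, ‖A x x‖ := norm_sum_le _ _
    _ ≤ ∑ _x : V, c := Finset.sum_le_sum fun x _ => h x
    _ = (Fintype.card V : ℝ) * c := by simp [Finset.sum_const, mul_comm]

lemma card_support_of_mem {k : ℕ} (j : ℕ → ℕ) (f : Fin N → Fin (k+1))
    (hf : ∀ h : ℕ, 1 ≤ h → (Finset.univ.filter fun i => (f i : ℕ) = h).card = j h) :
    (Finset.univ.filter fun i => f i ≠ 0).card = ∑ h ∈ Finset.Icc 1 k, j h := by
  have : ∀ h ∈ Finset.Icc 1 k, j h = (Finset.univ.filter fun i => (f i : ℕ) = h).card :=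
    fun h hh => (hf h (Finset.mem_Icc.1 hh).1).symm
  rw [Finset.sum_congr rfl this]
  simp only [Finset.card_filter]
  rw [Finset.sum_comm]
  refine Finset.sum_congr rfl fun i _ => ?_
  rw [Finset.sum_ite_eq (Finset.Icc 1 k) ((f i : ℕ)) (fun _ => (1:ℕ))]
  have hle : (f i : ℕ) ≤ k := Nat.lt_succ_iff.1 (f i).isLt
  have hiff : f i = 0 ↔ (f i : ℕ) = 0 := by
    rw [Fin.ext_iff, Fin.val_zero]
  by_cases h0 : f i = 0
  · rw [if_neg (by simpa using h0), if_neg]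
    simp only [Finset.mem_Icc, not_and]
    intro h1
    exact absurd (hiff.1 h0) (by omega)
  · have hv : (f i : ℕ) ≠ 0 := fun hc => h0 (hiff.2 hc)
    rw [if_pos (Finset.mem_Icc.2 ⟨Nat.one_le_iff_ne_zero.2 hv, hle⟩), if_pos h0]

end Helpers

section Main

variable {V : Type*} [Fintype V] [DecidableEq V]


lemma trace_pow_bound (G : SimpleGraph V) (hV : 1 ≤ Fintype.card V)
    (k : ℕ) (j : ℕ → ℕ) (m N p : ℕ) (hm : 1 ≤ m) (hN : 1 ≤ N)
    (hp : ∑ h ∈ Finset.Icc 1 k, j h = p) :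
    ‖Matrix.trace ((Cpart G N k j) ^ m)‖ ≤
      (((m*p/2 + 1) * (k+1)^((m*p/2)*m) * N^(m*p/2) *
        (Fintype.card V)^(N + m*(m*p/2)) : ℕ) : ℝ) := by
  classical
  obtain ⟨q, hq⟩ : ∃ q, q = m * p / 2 := ⟨_, rfl⟩
  rw [← hq]
  set SN : Finset (Fin N → Fin (k+1)) := Finset.univ.filter
      (fun f : Fin N → Fin (k + 1) => ∀ h : ℕ, 1 ≤ h →
        (Finset.univ.filter fun i => (f i : ℕ) = h).card = j h) with hSN
  set Bm : (Fin N → Fin (k+1)) → Fin N → Matrix V V ℂ :=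
      fun f i => if (f i : ℕ) = 0 then 1 else distMatrix G (f i) with hBm
  have hC : Cpart G N k j = ∑ f ∈ SN, elemTensor (Bm f) := by
    rw [hSN, hBm]
    unfold Cpart
    congr 1
    funext f
    refine congrArg elemTensor (funext fun i => ?_)
    beta_reduce
    by_cases h0 : (f i : ℕ) = 0
    · rw [if_pos h0, if_pos h0]
      ext a b
      by_cases hab : a = b <;> simp [Matrix.one_apply, hab]
    · rw [if_neg h0, if_neg h0]
  set Pi' := Fintype.piFinset (fun _ : Fin m => SN) with hPi
  have hBm_entry : ∀ f i (x y : V), ‖Bm f i x y‖ ≤ 1 := by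
    intro f i x y
    simp only [hBm]
    by_cases h0 : (f i : ℕ) = 0
    · rw [if_pos h0, Matrix.one_apply]
      split <;> simp
    · rw [if_neg h0]
      simp only [distMatrix, Matrix.of_apply]
      split <;> simp
  set trc : (Fin m → Fin N → Fin (k+1)) → Fin N → ℂ :=
      fun F i => ((List.ofFn fun l => Bm (F l) i).prod).trace with htrc
  have hterm : ∀ F : Fin m → Fin N → Fin (k+1),
      Matrix.trace ((List.ofFn fun l => elemTensor (Bm (F l))).prod) = ∏ i, trc F i := by
    intro F
    have h1 : (List.ofFn fun l => elemTensor (Bm (F l)))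
        = ((List.ofFn fun l => Bm (F l)).map elemTensor) := by
      rw [List.map_ofFn]; rfl
    rw [h1, prod_map_elemTensor, trace_elemTensor]
    refine Finset.prod_congr rfl fun i _ => ?_
    simp only [htrc]
    congr 1
    rw [List.map_ofFn]; rfl
  have hexp : Matrix.trace ((Cpart G N k j) ^ m) = ∑ F ∈ Pi', ∏ i, trc F i := by
    rw [hC, sum_pow_piFinset, Matrix.trace_sum]
    exact Finset.sum_congr rfl fun F _ => hterm F
  set good : (Fin m → Fin N → Fin (k+1)) → Prop :=
      fun F => ∀ i : Fin N, (Finset.univ.filter fun l : Fin m => F l i ≠ 0).card ≠ 1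
      with hgood
  -- bad terms vanish
  have hbad : ∀ F ∈ Pi', ¬ good F → ∏ i, trc F i = 0 := by
    intro F _ hFbad
    simp only [hgood, not_forall, not_not] at hFbad
    obtain ⟨i, hi⟩ := hFbad
    obtain ⟨l0, hl0⟩ := Finset.card_eq_one.1 hi
    have hmem : ∀ l : Fin m, F l i ≠ 0 ↔ l = l0 := by
      intro l
      constructor
      · intro hl
        have hmem2 : l ∈ Finset.univ.filter fun l : Fin m => F l i ≠ 0 :=
          Finset.mem_filter.2 ⟨Finset.mem_univ _, hl⟩
        rw [hl0] at hmem2; exact Finset.mem_singleton.1 hmem2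
      · rintro rfl
        have hmem2 : l ∈ Finset.univ.filter fun l' : Fin m => F l' i ≠ 0 := by
          rw [hl0]; exact Finset.mem_singleton_self _
        exact (Finset.mem_filter.1 hmem2).2
    have hprod : (List.ofFn fun l => Bm (F l) i).prod = Bm (F l0) i := by
      refine prod_ofFn_eq_of_forall_ne _ l0 fun l hl => ?_
      have hzero : F l i = 0 := by
        by_contra hc; exact hl ((hmem l).1 hc)
      simp only [hBm, hzero]
      simp
    have hval : (F l0 i : ℕ) ≠ 0 := by
      intro hc
      exact ((hmem l0).2 rfl) (by rw [Fin.ext_iff, Fin.val_zero]; exact hc)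
    refine Finset.prod_eq_zero (Finset.mem_univ i) ?_
    simp only [htrc]
    rw [hprod]
    simp only [hBm, if_neg hval]
    exact trace_distMatrix_eq_zero G (Nat.one_le_iff_ne_zero.2 hval)
  -- card of used-coordinate set
  have hUcard : ∀ F ∈ Pi', good F →
      (Finset.univ.filter (fun i : Fin N => ∃ l, F l i ≠ 0)).card ≤ q := by
    intro F hF hFgood
    set U : Finset (Fin N) := Finset.univ.filter (fun i => ∃ l, F l i ≠ 0) with hU
    have hsupp : ∀ l, (Finset.univ.filter fun i => F l i ≠ 0).card = p := by
      intro l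
      have hFl : F l ∈ SN := Fintype.mem_piFinset.1 hF l
      have hmemf := (Finset.mem_filter.1 hFl).2
      rw [card_support_of_mem j (F l) hmemf, hp]
    have hu2 : ∀ i ∈ U, 2 ≤ (Finset.univ.filter fun l : Fin m => F l i ≠ 0).card := by
      intro i hi
      obtain ⟨l, hl⟩ := (Finset.mem_filter.1 hi).2
      have h1 : 0 < (Finset.univ.filter fun l : Fin m => F l i ≠ 0).card :=
        Finset.card_pos.2 ⟨l, Finset.mem_filter.2 ⟨Finset.mem_univ _, hl⟩⟩
      have h2 := hFgood i
      omega
    have hcount : 2 * U.card ≤ m * p := by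
      calc 2 * U.card = ∑ _i ∈ U, 2 := by rw [Finset.sum_const, smul_eq_mul, mul_comm]
        _ ≤ ∑ i ∈ U, (Finset.univ.filter fun l : Fin m => F l i ≠ 0).card :=
            Finset.sum_le_sum hu2
        _ ≤ ∑ i : Fin N, (Finset.univ.filter fun l : Fin m => F l i ≠ 0).card :=
            Finset.sum_le_sum_of_subset (Finset.subset_univ U)
        _ = ∑ l : Fin m, (Finset.univ.filter fun i => F l i ≠ 0).card := by
            simp only [Finset.card_filter]
            rw [Finset.sum_comm]
        _ = m * p := by
            rw [Finset.sum_congr rfl fun l _ => hsupp l]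
            simp [Finset.sum_const, Finset.card_univ]
    generalize hmp : m * p = C at hcount hq
    omega
  -- bound for good terms
  have hgoodbound : ∀ F ∈ Pi', good F →
      ‖∏ i, trc F i‖ ≤ (Fintype.card V : ℝ) ^ (N + m * q) := by
    intro F hF hFgood
    set U : Finset (Fin N) := Finset.univ.filter (fun i => ∃ l, F l i ≠ 0) with hU
    have hu : U.card ≤ q := hUcard F hF hFgood
    have huN : U.card ≤ N := by
      have := Finset.card_le_card (Finset.subset_univ U)
      simpa using this
    have htr_used : ∀ i, ‖trc F i‖ ≤ (Fintype.card V : ℝ) ^ (m+1) := by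
      intro i
      have hlen : (List.ofFn fun l => Bm (F l) i).length = m := List.length_ofFn
      have hentry : ∀ A ∈ (List.ofFn fun l => Bm (F l) i), ∀ x y, ‖A x y‖ ≤ 1 := by
        intro A hA x y
        obtain ⟨l, rfl⟩ := List.mem_ofFn.1 hA
        exact hBm_entry _ _ _ _
      have hentry2 := abs_list_prod_entry_le _ hentry
      rw [hlen] at hentry2
      have h3 := abs_trace_le ((List.ofFn fun l => Bm (F l) i).prod) _ (fun x => hentry2 x x)
      calc ‖trc F i‖ ≤ (Fintype.card V : ℝ) * (Fintype.card V : ℝ)^m := h3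
        _ = (Fintype.card V : ℝ) ^ (m+1) := by rw [pow_succ]; ring
    have htr_unused : ∀ i ∉ U, ‖trc F i‖ = (Fintype.card V : ℝ) := by
      intro i hi
      have hall : ∀ l, F l i = 0 := by
        intro l; by_contra hc
        exact hi (Finset.mem_filter.2 ⟨Finset.mem_univ _, ⟨l, hc⟩⟩)
      have hone : (List.ofFn fun l => Bm (F l) i).prod = 1 := by
        apply List.prod_eq_one
        intro a ha
        obtain ⟨l, rfl⟩ := List.mem_ofFn.1 ha
        simp [hBm, hall l]
      simp only [htrc]
      rw [hone, Matrix.trace_one]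
      simp
    rw [norm_prod]
    calc ∏ i, ‖trc F i‖
        = (∏ i ∈ U, ‖trc F i‖) * ∏ i ∈ Uᶜ, ‖trc F i‖ :=
          (Finset.prod_mul_prod_compl U _).symm
      _ ≤ ((Fintype.card V:ℝ)^(m+1))^U.card * (Fintype.card V:ℝ)^(Uᶜ.card) := by
          have h1 : ∏ i ∈ U, ‖trc F i‖ ≤ ((Fintype.card V:ℝ)^(m+1))^U.card := by
            rw [← Finset.prod_const]
            exact Finset.prod_le_prod (fun i _ => norm_nonneg _)
              (fun i _ => htr_used i)
          have h2 : ∏ i ∈ Uᶜ, ‖trc F i‖ = (Fintype.card V:ℝ)^(Uᶜ.card) := by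
            rw [← Finset.prod_const]
            exact Finset.prod_congr rfl fun i hi => htr_unused i (Finset.mem_compl.1 hi)
          rw [h2]
          exact mul_le_mul_of_nonneg_right h1 (by positivity)
      _ = (Fintype.card V:ℝ)^((m+1)*U.card + (N - U.card)) := by
          rw [← pow_mul, ← pow_add, Finset.card_compl, Fintype.card_fin]
      _ ≤ (Fintype.card V:ℝ)^(N + m*q) := by
          apply pow_le_pow_right₀ (by exact_mod_cast hV)
          have h1 : m * U.card ≤ m * q := Nat.mul_le_mul_left m hu
          have e1 : (m+1) * U.card = U.card + m * U.card := by ring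
          rw [e1]
          generalize m * U.card = A at h1 ⊢
          generalize m * q = B at h1 ⊢
          omega
  -- counting good tuples
  set GFun : Finset (Fin N) → Finset (Fin N → Fin (k+1)) :=
      fun S => Fintype.piFinset
        (fun i => if i ∈ S then (Finset.univ : Finset (Fin (k+1))) else {0}) with hGFun
  set big : Finset (Fin m → Fin N → Fin (k+1)) :=
      (Finset.range (q+1)).biUnion (fun s =>
        (Finset.powersetCard s (Finset.univ : Finset (Fin N))).biUnion (fun S =>
          Fintype.piFinset (fun _ : Fin m => GFun S))) with hbig
  have hsubset : Pi'.filter good ⊆ big := by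
    intro F hF
    obtain ⟨hFP, hFgood⟩ := Finset.mem_filter.1 hF
    set U : Finset (Fin N) := Finset.univ.filter (fun i => ∃ l, F l i ≠ 0) with hU
    refine Finset.mem_biUnion.2 ⟨U.card,
      Finset.mem_range.2 (Nat.lt_succ_of_le (hUcard F hFP hFgood)), ?_⟩
    refine Finset.mem_biUnion.2 ⟨U, Finset.mem_powersetCard_univ.2 rfl, ?_⟩
    refine Fintype.mem_piFinset.2 fun l => ?_
    refine Fintype.mem_piFinset.2 fun i => ?_
    by_cases hi : i ∈ U
    · rw [if_pos hi]; exact Finset.mem_univ _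
    · rw [if_neg hi]
      have hzero : F l i = 0 := by
        by_contra hc
        exact hi (Finset.mem_filter.2 ⟨Finset.mem_univ _, ⟨l, hc⟩⟩)
      simp [hzero]
  have hGFuncard : ∀ S : Finset (Fin N), (GFun S).card = (k+1)^(S.card) := by
    intro S
    simp only [hGFun]
    rw [Fintype.card_piFinset]
    have hpt : ∀ i : Fin N,
        ((if i ∈ S then (Finset.univ : Finset (Fin (k+1))) else {0}).card)
          = if i ∈ S then (k+1) else 1 := by
      intro i
      split
      · simp
      · simp
    rw [Finset.prod_congr rfl fun i _ => hpt i]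
    rw [Finset.prod_ite_mem, Finset.prod_const, Finset.univ_inter]
  have hbigcard : big.card ≤ (q+1) * ((k+1)^(q*m) * N^q) := by
    calc big.card
        ≤ ∑ s ∈ Finset.range (q+1),
            ((Finset.powersetCard s (Finset.univ : Finset (Fin N))).biUnion (fun S =>
              Fintype.piFinset (fun _ : Fin m => GFun S))).card := Finset.card_biUnion_le
      _ ≤ ∑ s ∈ Finset.range (q+1), ∑ S ∈ Finset.powersetCard s (Finset.univ : Finset (Fin N)),
            (Fintype.piFinset (fun _ : Fin m => GFun S)).card :=
          Finset.sum_le_sum fun s _ => Finset.card_biUnion_le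
      _ ≤ ∑ s ∈ Finset.range (q+1), ∑ _S ∈ Finset.powersetCard s (Finset.univ : Finset (Fin N)),
            (k+1)^(q*m) := by
          refine Finset.sum_le_sum fun s hs => Finset.sum_le_sum fun S hS => ?_
          have hcardS : S.card = s := (Finset.mem_powersetCard.1 hS).2
          have hsq : s ≤ q := Nat.lt_succ_iff.1 (Finset.mem_range.1 hs)
          rw [Fintype.card_piFinset]
          rw [Finset.prod_congr rfl fun (l : Fin m) _ => hGFuncard S]
          rw [Finset.prod_const, Finset.card_univ, Fintype.card_fin, hcardS, ← pow_mul]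
          exact Nat.pow_le_pow_right (by omega) (Nat.mul_le_mul_right m hsq)
      _ ≤ ∑ _s ∈ Finset.range (q+1), (k+1)^(q*m) * N^q := by
          refine Finset.sum_le_sum fun s hs => ?_
          rw [Finset.sum_const, Finset.card_powersetCard, Finset.card_univ, Fintype.card_fin,
            smul_eq_mul]
          have h1 : N.choose s ≤ N^s := Nat.choose_le_pow N s
          have h2 : N^s ≤ N^q := Nat.pow_le_pow_right hN (Nat.lt_succ_iff.1 (Finset.mem_range.1 hs))
          calc N.choose s * (k+1)^(q*m) ≤ N^q * (k+1)^(q*m) :=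
                Nat.mul_le_mul_right _ (le_trans h1 h2)
            _ = (k+1)^(q*m) * N^q := Nat.mul_comm _ _
      _ = (q+1) * ((k+1)^(q*m) * N^q) := by
          rw [Finset.sum_const, Finset.card_range, smul_eq_mul]
  -- assemble
  rw [hexp]
  calc ‖∑ F ∈ Pi', ∏ i, trc F i‖
      = ‖∑ F ∈ Pi'.filter good, ∏ i, trc F i‖ := by
        rw [Finset.sum_filter_of_ne (fun F hF hne => by_contra fun hg => hne (hbad F hF hg))]
    _ ≤ ∑ F ∈ Pi'.filter good, ‖∏ i, trc F i‖ := norm_sum_le _ _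
    _ ≤ ∑ _F ∈ Pi'.filter good, (Fintype.card V : ℝ)^(N + m*q) :=
        Finset.sum_le_sum fun F hF =>
          hgoodbound F (Finset.mem_filter.1 hF).1 (Finset.mem_filter.1 hF).2
    _ = ((Pi'.filter good).card : ℝ) * (Fintype.card V : ℝ)^(N + m*q) := by
        rw [Finset.sum_const, nsmul_eq_mul]
    _ ≤ (((q+1) * ((k+1)^(q*m) * N^q) : ℕ) : ℝ) * (Fintype.card V : ℝ)^(N+m*q) := by
        apply mul_le_mul_of_nonneg_right _ (by positivity)
        exact_mod_cast le_trans (Finset.card_le_card hsubset) hbigcard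
    _ = (((q + 1) * (k+1)^(q*m) * N^q *
        (Fintype.card V)^(N + m*q) : ℕ) : ℝ) := by
        push_cast
        ring

end Main

lemma partition_facts (k : ℕ) (hk : 1 ≤ k) (j : ℕ → ℕ)
    (hpart : ∑ᶠ h : ℕ, h * j h = k)
    (hne : ∃ h : ℕ, 2 ≤ h ∧ j h ≠ 0) :
    ∑ h ∈ Finset.Icc 1 k, j h + 1 ≤ k := by
  classical
  have hfin : (Function.support fun h => h * j h).Finite := by
    by_contra hinf
    rw [finsum_of_infinite_support hinf] at hpart
    omega
  have hsum : ∑ h ∈ hfin.toFinset, h * j h = k := by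
    rw [← finsum_eq_sum _ hfin, hpart]
  have hbound : ∀ h : ℕ, j h ≠ 0 → h ≤ k := by
    intro h hjh
    by_contra hgt
    push_neg at hgt
    have hmem : h ∈ hfin.toFinset := by
      rw [Set.Finite.mem_toFinset, Function.mem_support]
      have : 0 < h * j h := Nat.mul_pos (by omega) (Nat.pos_of_ne_zero hjh)
      omega
    have h1 : h * j h ≤ ∑ h ∈ hfin.toFinset, h * j h :=
      Finset.single_le_sum (f := fun h => h * j h) (fun _ _ => Nat.zero_le _) hmem
    rw [hsum] at h1
    have h2 : h ≤ h * j h := Nat.le_mul_of_pos_right h (Nat.pos_of_ne_zero hjh)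
    omega
  have hsupp : (Function.support fun h => h * j h) ⊆ ↑(Finset.Icc 1 k) := by
    intro h hh
    rw [Function.mem_support] at hh
    have hj : j h ≠ 0 := by
      intro hc; rw [hc, Nat.mul_zero] at hh; exact hh rfl
    have h1 : h ≠ 0 := by
      intro hc; rw [hc, Nat.zero_mul] at hh; exact hh rfl
    simp only [Finset.coe_Icc, Set.mem_Icc]
    exact ⟨Nat.one_le_iff_ne_zero.2 h1, hbound h hj⟩
  have hsum2 : ∑ h ∈ Finset.Icc 1 k, h * j h = k := by
    rw [← finsum_eq_sum_of_support_subset _ hsupp, hpart]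
  obtain ⟨h0, hh0, hjh0⟩ := hne
  have hh0k : h0 ∈ Finset.Icc 1 k :=
    Finset.mem_Icc.2 ⟨by omega, hbound h0 hjh0⟩
  have key : ∀ h ∈ Finset.Icc 1 k, j h + (if h = h0 then 1 else 0) ≤ h * j h := by
    intro h hh
    have h1 : 1 ≤ h := (Finset.mem_Icc.1 hh).1
    by_cases he : h = h0
    · subst he
      rw [if_pos rfl]
      have h2 : 2 * j h ≤ h * j h := Nat.mul_le_mul_right _ hh0
      have h3 : 1 ≤ j h := Nat.pos_of_ne_zero hjh0
      omega
    · rw [if_neg he]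
      calc j h = 1 * j h := (Nat.one_mul _).symm
        _ ≤ h * j h := Nat.mul_le_mul_right _ h1
  calc ∑ h ∈ Finset.Icc 1 k, j h + 1
      = ∑ h ∈ Finset.Icc 1 k, (j h + if h = h0 then 1 else 0) := by
        rw [Finset.sum_add_distrib, Finset.sum_ite_eq' (Finset.Icc 1 k) h0 (fun _ => 1),
          if_pos hh0k]
    _ ≤ ∑ h ∈ Finset.Icc 1 k, h * j h := Finset.sum_le_sum key
    _ = k := hsum2

/-- Lemma 4.4: let `G` be a finite connected graph, `k ≥ 1`, and `λ` a partition of `k`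
(given by its multiplicity function `j`, so that `∑ᶠ h, h · j h = k`) different from
`λ₀ = (k, 0, 0, …)` (i.e. some part `h ≥ 2` occurs). Then, w.r.t. the normalized trace
`a ↦ |V|^{-N} Tr(a)` on `M(V)^{⊗N}`, the moments of `C(λ)/N^{k/2}` tend to `0` as
`N → ∞`; indeed the `m`-th moment is `O(N^{-m/2})`. -/
theorem Cpart_tendsto_zero
    {V : Type*} [Fintype V] [DecidableEq V] (G : SimpleGraph V) (hconn : G.Connected)
    (k : ℕ) (hk : 1 ≤ k) (j : ℕ → ℕ)
    (hpart : ∑ᶠ h : ℕ, h * j h = k)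
    (hne : ∃ h : ℕ, 2 ≤ h ∧ j h ≠ 0)
    (m : ℕ) (hm : 1 ≤ m) :
    Tendsto
      (fun N : ℕ =>
        ((Fintype.card V : ℂ) ^ N)⁻¹ *
          Matrix.trace (((((N : ℝ) ^ (-(k : ℝ) / 2) : ℝ) : ℂ) • Cpart G N k j) ^ m))
      atTop (𝓝 0) ∧
    (fun N : ℕ =>
        ((Fintype.card V : ℂ) ^ N)⁻¹ *
          Matrix.trace (((((N : ℝ) ^ (-(k : ℝ) / 2) : ℝ) : ℂ) • Cpart G N k j) ^ m))
      =O[atTop] (fun N : ℕ => (N : ℝ) ^ (-(m : ℝ) / 2)) := by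

  classical
  have hV1 : 1 ≤ Fintype.card V := Fintype.card_pos_iff.2 hconn.nonempty
  have hVpos : (0:ℝ) < (Fintype.card V : ℝ) := by exact_mod_cast hV1
  obtain ⟨p, hpdef⟩ : ∃ p, ∑ h ∈ Finset.Icc 1 k, j h = p := ⟨_, rfl⟩
  have hpk : p + 1 ≤ k := by
    rw [← hpdef]
    exact partition_facts k hk j hpart hne
  obtain ⟨q, hqdef⟩ : ∃ q, q = m * p / 2 := ⟨_, rfl⟩
  set CST : ℝ := (((q + 1) * (k+1)^(q*m) : ℕ) : ℝ) with hCST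
  set K : ℝ := CST * (Fintype.card V : ℝ)^(m*q) with hK
  set g : ℕ → ℂ := fun N =>
      ((Fintype.card V : ℂ) ^ N)⁻¹ *
        Matrix.trace (((((N : ℝ) ^ (-(k : ℝ) / 2) : ℝ) : ℂ) • Cpart G N k j) ^ m) with hg
  have hbound : ∀ N : ℕ, 1 ≤ N → ‖g N‖ ≤ K * (N:ℝ) ^ (-(m:ℝ)/2) := by
    intro N hN
    have hNpos : (0:ℝ) < (N:ℝ) := by exact_mod_cast hN
    have htb := trace_pow_bound G hV1 k j m N p hm hN hpdef
    rw [← hqdef] at htb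
    set r : ℝ := (N:ℝ) ^ (-(k:ℝ)/2) with hr
    have hr0 : 0 ≤ r := Real.rpow_nonneg (Nat.cast_nonneg N) _
    have hsm : (((r : ℝ) : ℂ) • Cpart G N k j) ^ m
        = ((r:ℂ))^m • (Cpart G N k j)^m := smul_pow _ _ _
    have hgN : g N = ((Fintype.card V : ℂ) ^ N)⁻¹ *
        (((r:ℂ))^m * Matrix.trace ((Cpart G N k j)^m)) := by
      rw [hg]
      simp only []
      rw [hsm, Matrix.trace_smul, smul_eq_mul]
    have habs : ‖g N‖ =
        ((Fintype.card V : ℝ) ^ N)⁻¹ * (r^m * ‖Matrix.trace ((Cpart G N k j)^m)‖) := by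
      rw [hgN, norm_mul, norm_mul, norm_inv, norm_pow, norm_pow, Complex.norm_natCast,
        Complex.norm_real, Real.norm_eq_abs, abs_of_nonneg hr0]
    rw [habs]
    have hkey2 : r^m * ((N:ℝ))^(q:ℕ) ≤ (N:ℝ) ^ (-(m:ℝ)/2) := by
      have h1 : r^m = (N:ℝ) ^ ((-(k:ℝ)/2) * m) := by
        rw [hr, ← Real.rpow_natCast ((N:ℝ) ^ (-(k:ℝ)/2)) m, ← Real.rpow_mul (Nat.cast_nonneg N)]
      have h2 : ((N:ℝ))^(q:ℕ) = (N:ℝ) ^ ((q:ℕ):ℝ) := (Real.rpow_natCast _ _).symm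
      rw [h1, h2, ← Real.rpow_add hNpos]
      apply Real.rpow_le_rpow_of_exponent_le (by exact_mod_cast hN)
      have hq2 : 2 * q ≤ m * p := by
        rw [hqdef, Nat.mul_comm 2 _]
        exact Nat.div_mul_le_self (m*p) 2
      have hq3 : 2*q + m ≤ m * k := by
        have h4 : m * (p+1) ≤ m * k := Nat.mul_le_mul_left m hpk
        have h5 : m * (p+1) = m * p + m := by ring
        omega
      have hq3' : (2*q + m : ℝ) ≤ (m : ℝ) * k := by exact_mod_cast hq3
      push_cast at hq3' ⊢
      linarith
    calc ((Fintype.card V : ℝ) ^ N)⁻¹ *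
          (r^m * ‖Matrix.trace ((Cpart G N k j)^m)‖)
        ≤ ((Fintype.card V : ℝ) ^ N)⁻¹ *
          (r^m * (((q + 1) * (k+1)^(q*m) * N^q *
            (Fintype.card V)^(N + m*q) : ℕ) : ℝ)) := by
          apply mul_le_mul_of_nonneg_left _ (by positivity)
          exact mul_le_mul_of_nonneg_left htb (by positivity)
      _ = K * (r^m * ((N:ℝ))^(q:ℕ)) := by
          rw [hK, hCST]
          push_cast
          rw [pow_add]
          field_simp
      _ ≤ K * ((N:ℝ) ^ (-(m:ℝ)/2)) := by
          apply mul_le_mul_of_nonneg_left hkey2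
          rw [hK, hCST]; positivity
  have hO : g =O[atTop] (fun N : ℕ => (N : ℝ) ^ (-(m : ℝ) / 2)) := by
    rw [Asymptotics.isBigO_iff]
    refine ⟨K, Filter.eventually_atTop.2 ⟨1, fun N hN => ?_⟩⟩
    have hNpos : (0:ℝ) < (N:ℝ) := by exact_mod_cast hN
    rw [Real.norm_eq_abs,
      abs_of_pos (Real.rpow_pos_of_pos hNpos _)]
    exact hbound N hN
  have hz : Tendsto (fun N : ℕ => (N:ℝ) ^ (-(m:ℝ)/2)) atTop (𝓝 0) := by
    have h1 : Tendsto (fun x : ℝ => x ^ (-((m:ℝ)/2))) atTop (𝓝 0) :=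
      tendsto_rpow_neg_atTop (by positivity)
    have h2 : Tendsto (fun x : ℝ => x ^ (-(m:ℝ)/2)) atTop (𝓝 0) := by
      rw [neg_div]
      exact h1
    exact h2.comp tendsto_natCast_atTop_atTop
  exact ⟨hO.trans_tendsto hz, hO⟩
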